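/- Suppose the finite sequence (a_1, …, a_n) is partitioned into consecutive blocks S_1, …, S_m, each of which is a slice, with slice-weights s_1, …, s_m. Then (a_1, …, a_n) satisfies (ASC) if and only if (s_1, …, s_m) satisfies (ASC). Consequently (a_1, …, a_n) is a slice (resp. ev-sequence) if and only if (s_1, …, s_m) is, and in that case both have the same weight. -/

import Mathlib

/-- Condition (ASC): all even-length initial alternating sums are ≤ 0. -/
def ASC (l : List ℝ) : Prop :=
  ∀ k : ℕ, 1 ≤ k → 2 * k ≤ l.length → (l.take (2 * k)).alternatingSum ≤ 0

/-- A slice: odd length, and both the sequence and its reverse satisfy (ASC). -/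
def IsSlice (l : List ℝ) : Prop := Odd l.length ∧ ASC l ∧ ASC l.reverse

/-- An ev-sequence: even length, satisfying (ASC). -/
def IsEvSeq (l : List ℝ) : Prop := Even l.length ∧ ASC l

private lemma alt_append_odd (t u : List ℝ) (h : Odd t.length) :
    (t ++ u).alternatingSum = t.alternatingSum - u.alternatingSum := by
  rw [List.alternatingSum_append, Odd.neg_one_pow h]
  simp [sub_eq_add_neg]

private lemma alt_append_even (t u : List ℝ) (h : Even t.length) :
    (t ++ u).alternatingSum = t.alternatingSum + u.alternatingSum := by
  rw [List.alternatingSum_append, Even.neg_one_pow h]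
  simp

private lemma alt_reverse_even (l : List ℝ) (h : Even l.length) :
    l.reverse.alternatingSum = -l.alternatingSum := by
  rw [List.alternatingSum_reverse, Odd.neg_one_pow h.add_one]
  simp

private lemma alt_reverse_odd (l : List ℝ) (h : Odd l.length) :
    l.reverse.alternatingSum = l.alternatingSum := by
  rw [List.alternatingSum_reverse, Even.neg_one_pow h.add_one]
  simp

private lemma asc_take_le (l : List ℝ) (h : ASC l) {n : ℕ} (hn : Even n)
    (hle : n ≤ l.length) : (l.take n).alternatingSum ≤ 0 := by
  obtain ⟨k, hk⟩ := hn
  rcases Nat.eq_zero_or_pos k with h0 | h1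
  · subst hk; subst h0; simp
  · have := h k h1 (by omega)
    rwa [show 2 * k = n by omega] at this

private lemma slice_drop_nonneg (l : List ℝ) (h : ASC l.reverse) {n : ℕ}
    (hpar : Even (l.length - n)) (hle : n ≤ l.length) :
    0 ≤ (l.drop n).alternatingSum := by
  have h1 : (l.drop n).reverse.alternatingSum ≤ 0 := by
    rw [List.reverse_drop]
    exact asc_take_le _ h hpar (by simp)
  have h2 : (l.drop n).reverse.alternatingSum = -(l.drop n).alternatingSum :=
    alt_reverse_even _ (by simpa using hpar)
  linarith

private lemma slice_alt_le_take (l : List ℝ) (h : IsSlice l) {n : ℕ} (hn : Odd n)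
    (hle : n ≤ l.length) : l.alternatingSum ≤ (l.take n).alternatingSum := by
  obtain ⟨hodd, hA, hR⟩ := h
  have hdrop : 0 ≤ (l.drop n).alternatingSum :=
    slice_drop_nonneg l hR (Nat.Odd.sub_odd hodd hn) hle
  have heq : l.alternatingSum = (l.take n).alternatingSum - (l.drop n).alternatingSum := by
    conv_lhs => rw [← List.take_append_drop n l]
    rw [alt_append_odd _ _ (by simpa [List.length_take, min_eq_left hle] using hn)]
  linarith

private lemma flatten_alt (S : List (List ℝ)) (h : ∀ s ∈ S, Odd s.length) :
    S.flatten.alternatingSum = (S.map List.alternatingSum).alternatingSum := by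
  induction S with
  | nil => simp
  | cons t rest ih =>
    rw [List.flatten_cons, alt_append_odd _ _ (h t (by simp)), List.map_cons,
      List.alternatingSum_cons, ih (fun s hs => h s (by simp [hs]))]

private lemma flatten_parity (S : List (List ℝ)) (h : ∀ s ∈ S, Odd s.length) :
    (Even S.flatten.length ↔ Even S.length) := by
  induction S with
  | nil => simp
  | cons t rest ih =>
    have ht := Nat.odd_iff.mp (h t (by simp))
    have ih' := ih (fun s hs => h s (by simp [hs]))
    simp only [Nat.even_iff] at ih' ⊢
    simp only [List.flatten_cons, List.length_append, List.length_cons]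
    omega

private lemma asc_flatten_to_weights (S : List (List ℝ)) (hS : ∀ s ∈ S, IsSlice s)
    (h : ASC S.flatten) : ASC (S.map List.alternatingSum) := by
  intro k hk hkle
  have hodd : ∀ s ∈ S, Odd s.length := fun s hs => (hS s hs).1
  rw [List.length_map] at hkle
  rw [← List.map_take, ← flatten_alt _ (fun s hs => hodd s (List.mem_of_mem_take hs))]
  set L := ((S.take (2 * k)).flatten).length with hL
  have h2 : (S.take (2 * k)).flatten = S.flatten.take L := by
    conv_rhs => rw [← List.take_append_drop (2 * k) S, List.flatten_append, List.take_left]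
  have hLe : Even L := by
    refine (flatten_parity _ (fun s hs => hodd s (List.mem_of_mem_take hs))).mpr ?_
    rw [List.length_take, min_eq_left hkle]
    exact even_two_mul k
  have hLle : L ≤ S.flatten.length := by
    conv_rhs => rw [← List.take_append_drop (2 * k) S, List.flatten_append]
    rw [List.length_append]
    exact Nat.le_add_right _ _
  rw [h2]
  obtain ⟨j, hj⟩ := hLe
  rcases Nat.eq_zero_or_pos j with h0 | hpos
  · have : L = 0 := by omega
    simp [this]
  · have := h j hpos (by omega)
    rwa [show L = 2 * j by omega]

private lemma aux_rev (N : ℕ) : ∀ (S : List (List ℝ)), S.length ≤ N →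
    (∀ s ∈ S, IsSlice s) → ∀ c : ℝ, c ≤ 0 →
    (∀ k, 1 ≤ k → 2 * k ≤ S.length →
      c + ((S.map List.alternatingSum).take (2 * k)).alternatingSum ≤ 0) →
    ∀ n, Even n → n ≤ S.flatten.length →
      c + (S.flatten.take n).alternatingSum ≤ 0 := by
  induction N with
  | zero =>
    intro S hlen hS c hc hH n hn hnle
    have : S = [] := List.length_eq_zero_iff.mp (by omega)
    subst this
    simp only [List.flatten_nil, List.length_nil, Nat.le_zero] at hnle
    simp [hnle, hc]
  | succ N ih =>
    intro S hlen hS c hc hH n hn hnle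
    match S with
    | [] =>
      simp only [List.flatten_nil, List.length_nil, Nat.le_zero] at hnle
      simp [hnle, hc]
    | t :: rest =>
      have ht := hS t (by simp)
      have htodd := ht.1
      by_cases h1 : n ≤ t.length
      · rw [List.flatten_cons, List.take_append_of_le_length h1]
        have := asc_take_le t ht.2.1 hn h1
        linarith
      · push_neg at h1
        match rest with
        | [] =>
          exfalso
          simp only [List.flatten_cons, List.flatten_nil, List.append_nil] at hnle
          omega
        | u :: rest2 =>
          have hu := hS u (by simp)
          have huodd := hu.1
          -- the key fact from k = 1
          have hk1 : c + t.alternatingSum - u.alternatingSum ≤ 0 := by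
            have := hH 1 le_rfl (by simp)
            have heq : ((t :: u :: rest2).map List.alternatingSum).take (2 * 1) =
                [t.alternatingSum, u.alternatingSum] := by
              simp [List.take]
            rw [heq] at this
            simp [List.alternatingSum] at this
            linarith
          by_cases h2 : n ≤ t.length + u.length
          · set m := n - t.length with hm
            have hmle : m ≤ u.length := by omega
            have hmodd : Odd m := by
              rw [Nat.odd_iff] at htodd ⊢
              rw [Nat.even_iff] at hn
              omega
            have hsplit : (t :: u :: rest2).flatten.take n = t ++ u.take m := by
              rw [List.flatten_cons, List.take_append,
                List.take_of_length_le (by omega), List.flatten_cons,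
                List.take_append_of_le_length (by omega)]
            rw [hsplit, alt_append_odd _ _ htodd]
            have hsl := slice_alt_le_take u hu hmodd hmle
            linarith
          · push_neg at h2
            set m := n - t.length - u.length with hm
            have hmeven : Even m := by
              rw [Nat.odd_iff] at htodd huodd
              rw [Nat.even_iff] at hn ⊢
              omega
            have hflat : (t :: u :: rest2).flatten = (t ++ u) ++ rest2.flatten := by
              simp [List.flatten_cons, List.append_assoc]
            have hsplit : (t :: u :: rest2).flatten.take n =
                (t ++ u) ++ rest2.flatten.take m := by
              rw [hflat, List.take_append,
                List.take_of_length_le (by simp; omega)]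
              congr 2
              simp only [List.length_append]
              omega
            have hlenflat : m ≤ rest2.flatten.length := by
              rw [hflat, List.length_append, List.length_append] at hnle
              omega
            have hevtu : Even (t ++ u).length := by
              rw [List.length_append]
              exact htodd.add_odd huodd
            rw [hsplit, alt_append_even _ _ hevtu, alt_append_odd _ _ htodd]
            have hH' : ∀ k, 1 ≤ k → 2 * k ≤ rest2.length →
                (c + t.alternatingSum - u.alternatingSum) +
                  ((rest2.map List.alternatingSum).take (2 * k)).alternatingSum ≤ 0 := by
              intro k hk hkle
              have hgot := hH (k + 1) (by omega) (by simp; omega)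
              have heq : ((t :: u :: rest2).map List.alternatingSum).take (2 * (k + 1)) =
                  t.alternatingSum :: u.alternatingSum ::
                    ((rest2.map List.alternatingSum).take (2 * k)) := by
                rw [show 2 * (k + 1) = (2 * k + 1) + 1 by ring]
                simp [List.take_succ_cons]
              rw [heq, List.alternatingSum_cons_cons] at hgot
              linarith
            have := ih rest2 (by simp at hlen; omega)
              (fun s hs => hS s (by simp [hs]))
              (c + t.alternatingSum - u.alternatingSum) hk1 hH' m hmeven hlenflat
            linarith

private lemma weights_to_asc_flatten (S : List (List ℝ)) (hS : ∀ s ∈ S, IsSlice s)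
    (h : ASC (S.map List.alternatingSum)) : ASC S.flatten := by
  intro k hk hkle
  have := aux_rev S.length S le_rfl hS 0 le_rfl
    (fun k' hk' hkle' => by
      have := h k' hk' (by simpa using hkle')
      linarith)
    (2 * k) (even_two_mul k) hkle
  linarith

private lemma slice_reverse {l : List ℝ} (h : IsSlice l) : IsSlice l.reverse :=
  ⟨by simpa using h.1, h.2.2, by rw [List.reverse_reverse]; exact h.2.1⟩

/-- If a sequence is partitioned into consecutive slices, then (ASC) (resp. being a slice,
being an ev-sequence) holds for the sequence iff it holds for the sequence of slice-weights,
and the alternating sums agree. -/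
theorem asc_iff_slice_weights (S : List (List ℝ)) (hS : ∀ s ∈ S, IsSlice s) :
    (ASC S.flatten ↔ ASC (S.map List.alternatingSum)) ∧
    (IsSlice S.flatten ↔ IsSlice (S.map List.alternatingSum)) ∧
    (IsEvSeq S.flatten ↔ IsEvSeq (S.map List.alternatingSum)) ∧
    S.flatten.alternatingSum = (S.map List.alternatingSum).alternatingSum := by
  have hodd : ∀ s ∈ S, Odd s.length := fun s hs => (hS s hs).1
  have main : ASC S.flatten ↔ ASC (S.map List.alternatingSum) :=
    ⟨asc_flatten_to_weights S hS, weights_to_asc_flatten S hS⟩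
  set R := (S.map List.reverse).reverse with hR
  have hRs : ∀ s ∈ R, IsSlice s := by
    intro s hs
    rw [hR, List.mem_reverse, List.mem_map] at hs
    obtain ⟨a, ha, rfl⟩ := hs
    exact slice_reverse (hS a ha)
  have hRflat : R.flatten = S.flatten.reverse := List.reverse_flatten.symm
  have hRw : R.map List.alternatingSum = (S.map List.alternatingSum).reverse := by
    rw [hR, ← List.map_reverse, ← List.map_reverse, List.map_map]
    exact List.map_congr_left fun a ha => alt_reverse_odd a (hodd a (List.mem_reverse.mp ha))
  have mainR : ASC S.flatten.reverse ↔ ASC (S.map List.alternatingSum).reverse := by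
    rw [← hRflat, ← hRw]
    exact ⟨asc_flatten_to_weights R hRs, weights_to_asc_flatten R hRs⟩
  have hpar : Even S.flatten.length ↔ Even (S.map List.alternatingSum).length := by
    rw [List.length_map]; exact flatten_parity S hodd
  have hparo : Odd S.flatten.length ↔ Odd (S.map List.alternatingSum).length := by
    rw [← Nat.not_even_iff_odd, ← Nat.not_even_iff_odd]
    exact not_congr hpar
  refine ⟨main, ?_, ?_, flatten_alt S hodd⟩
  · constructor <;> rintro ⟨h1, h2, h3⟩
    · exact ⟨hparo.mp h1, main.mp h2, mainR.mp h3⟩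
    · exact ⟨hparo.mpr h1, main.mpr h2, mainR.mpr h3⟩
  · constructor <;> rintro ⟨h1, h2⟩
    · exact ⟨hpar.mp h1, main.mp h2⟩
    · exact ⟨hpar.mpr h1, main.mpr h2⟩
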